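/- arXiv:2208.10079 — 2 statements merged into one kernel-verified Lean document; each statement's English description precedes it below -/
import Mathlib

section
/- Let D be the m × m integer matrix whose row i − 1, for each 2 ≤ i ≤ m, is (−ℓ_{i,1}, …, −ℓ_{i,i−1}, d_{i−1}/d_i, 0, …, 0) (the entry d_{i−1}/d_i standing in column i and zeros thereafter), and whose last row is (b_1, …, b_m). Then det(D) = (−1)^m. -/
open Finset

/-- `dseq a i` is `gcd(a 1, …, a i)`. -/
def dseq (a : ℕ → ℕ) (i : ℕ) : ℕ := Finset.gcd (Finset.Icc 1 i) a

/-- `BAm m a ℓ` says that the tuple `(ℓ 1, …, ℓ m)` belongs to `B(A_m)`. -/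
def BAm (m : ℕ) (a : ℕ → ℕ) (ℓ : ℕ → ℕ) : Prop :=
  (∀ j, (j < 1 ∨ m < j) → ℓ j = 0) ∧
    ∀ i, 2 ≤ i → i ≤ m → ℓ i < dseq a (i - 1) / dseq a i

/-- `Telescopic m a` says that `(a 1, …, a m)` is a telescopic sequence. -/
def Telescopic (m : ℕ) (a : ℕ → ℕ) : Prop :=
  2 ≤ m ∧ (∀ i, 1 ≤ i → i ≤ m → 2 ≤ a i) ∧ dseq a m = 1 ∧
    ∀ i, 2 ≤ i → i ≤ m → ∃ ℓ : ℕ → ℕ, (∀ j, (j < 1 ∨ i ≤ j) → ℓ j = 0) ∧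
      a i * dseq a (i - 1) = dseq a i * ∑ j ∈ Finset.Icc 1 m, ℓ j * a j


lemma detAux : ∀ (n : ℕ) (M : Matrix (Fin (n+1)) (Fin (n+1)) ℤ),
    (∀ c : Fin (n+1), M (Fin.last n) c = if (c : ℕ) = 0 then 1 else 0) →
    (∀ r c : Fin (n+1), (r:ℕ) < n → (r:ℕ) + 1 < (c:ℕ) → M r c = 0) →
    M.det = (-1)^n * ∏ r : Fin n, M r.castSucc r.succ := by
  intro n
  induction n with
  | zero =>
    intro M h1 _
    rw [Matrix.det_fin_one]
    have := h1 0
    simpa using this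
  | succ n ih =>
    intro M hlast hzero
    rw [Matrix.det_succ_column M (Fin.last (n+1))]
    rw [Finset.sum_eq_single ((Fin.last n).castSucc)]
    · have hrow : ∀ (j : Fin (n+1)), ((Fin.last n).castSucc : Fin (n+2)).succAbove j =
        if (j : ℕ) < n then j.castSucc else j.succ := by
        intro j
        rw [Fin.succAbove]
        split_ifs with h1 h2 h2
        · rfl
        · exfalso; apply h2; simpa [Fin.lt_def] using h1
        · exfalso; apply h1; simpa [Fin.lt_def] using h2
        · rfl
      set M' := M.submatrix ((Fin.last n).castSucc : Fin (n+2)).succAbove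
        (Fin.last (n+1)).succAbove with hM'
      have hcol : (Fin.last (n+1)).succAbove = Fin.castSucc := by
        funext j; exact Fin.succAbove_last_apply j
      have h1' : ∀ c : Fin (n+1), M' (Fin.last n) c = if (c : ℕ) = 0 then 1 else 0 := by
        intro c
        rw [hM', Matrix.submatrix_apply, hrow, hcol]
        simp only [Fin.val_last, lt_irrefl, if_false, Fin.succ_last]
        rw [hlast]
        simp
      have h2' : ∀ r c : Fin (n+1), (r:ℕ) < n → (r:ℕ) + 1 < (c:ℕ) → M' r c = 0 := by
        intro r c hr hc
        rw [hM', Matrix.submatrix_apply, hrow, hcol, if_pos hr]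
        exact hzero r.castSucc c.castSucc (by simp only [Fin.coe_castSucc]; omega)
          (by simpa using hc)
      have hprod : ∀ r : Fin n, M' r.castSucc r.succ
          = M r.castSucc.castSucc r.castSucc.succ := by
        intro r
        rw [hM', Matrix.submatrix_apply, hrow, hcol,
          if_pos (by simpa using r.isLt)]
        congr 1
      rw [ih M' h1' h2', Fin.prod_univ_castSucc (f := fun r : Fin (n+1) => M r.castSucc r.succ)]
      simp only [hprod]
      have hsign : ((-1 : ℤ))^(((Fin.last n).castSucc : Fin (n+2)).val + (Fin.last (n+1)).val)
          = -(-1)^(n+n) := by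
        simp only [Fin.coe_castSucc, Fin.val_last]
        rw [show n + (n+1) = (n+n)+1 by omega, pow_succ]
        ring
      have hMl : M ((Fin.last n).castSucc) (Fin.last (n+1))
          = M ((Fin.last n).castSucc) ((Fin.last n).succ) := by
        rw [Fin.succ_last]
      rw [hsign, hMl, Even.neg_one_pow ⟨n, rfl⟩, pow_succ]
      ring
    · intro i _ hi
      rcases Nat.lt_trichotomy (i : ℕ) n with h | h | h
      · rw [hzero i (Fin.last (n+1)) (by omega) (by simp; omega)]; ring
      · exact absurd (Fin.ext h : i = (Fin.last n).castSucc) hi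
      · have : i = Fin.last (n+1) := Fin.ext (by have := i.isLt; simp; omega)
        subst this
        rw [hlast]
        simp
    · intro h; exact absurd (Finset.mem_univ _) h

lemma dseq_one (a : ℕ → ℕ) : dseq a 1 = a 1 := by
  simp [dseq]

lemma dseq_succ (a : ℕ → ℕ) (j : ℕ) :
    dseq a (j+1) = Nat.gcd (a (j+1)) (dseq a j) := by
  unfold dseq
  rw [show Finset.Icc 1 (j+1) = insert (j+1) (Finset.Icc 1 j) by
    ext x; simp [Finset.mem_Icc, Finset.mem_insert]; omega]
  rw [Finset.gcd_insert]
  rfl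

lemma dseq_dvd_a (a : ℕ → ℕ) (j k : ℕ) (h1 : 1 ≤ k) (h2 : k ≤ j) :
    dseq a j ∣ a k :=
  Finset.gcd_dvd (by simp [Finset.mem_Icc]; omega)

lemma dseq_step_dvd (a : ℕ → ℕ) (j : ℕ) : dseq a (j+1) ∣ dseq a j := by
  rw [dseq_succ]; exact Nat.gcd_dvd_right _ _

lemma dseq_pos (a : ℕ → ℕ) (ha : 2 ≤ a 1) (j : ℕ) (hj : 1 ≤ j) :
    0 < dseq a j := by
  rcases Nat.eq_zero_or_pos (dseq a j) with h | h
  · exfalso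
    have : a 1 = 0 := (Finset.gcd_eq_zero_iff.mp h) 1 (by simp [Finset.mem_Icc]; omega)
    omega
  · exact h

/-- The tail-vanishing + sum identity key lemma. -/
lemma key_lemma (m : ℕ) (a : ℕ → ℕ) (ha : ∀ i, 1 ≤ i → i ≤ m → 2 ≤ a i)
    (i : ℕ) (h2i : 2 ≤ i) (him : i ≤ m) (ℓ : ℕ → ℕ)
    (hB : BAm m a ℓ)
    (hsum : dseq a i * ∑ j ∈ Finset.Icc 1 m, a j * ℓ j = a i * dseq a (i - 1)) :
    (∀ j, i ≤ j → ℓ j = 0) ∧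
      (∑ k ∈ Finset.Icc 1 m, a k * ℓ k) = a i * (dseq a (i-1) / dseq a i) := by
  obtain ⟨hB0, hBlt⟩ := hB
  have ha1 : 2 ≤ a 1 := ha 1 le_rfl (by omega)
  have hdd : dseq a i ∣ dseq a (i-1) := by
    have := dseq_step_dvd a (i-1)
    rwa [show i - 1 + 1 = i by omega] at this
  have hipos : 0 < dseq a i := dseq_pos a ha1 i (by omega)
  have hSval : ∑ k ∈ Finset.Icc 1 m, a k * ℓ k = a i * (dseq a (i-1) / dseq a i) := by
    apply Nat.eq_of_mul_eq_mul_left hipos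
    rw [hsum, mul_left_comm, Nat.mul_div_cancel' hdd]
  refine ⟨?_, hSval⟩
  -- the step
  have step : ∀ j, i ≤ j → j ≤ m → (∀ k, j < k → k ≤ m → ℓ k = 0) → ℓ j = 0 := by
    intro j h1 h2 htail
    have hj2 : 2 ≤ j := le_trans h2i h1
    have hj1 : 1 ≤ j - 1 := by omega
    -- restrict the sum
    have hsplit : ∑ k ∈ Finset.Icc 1 m, a k * ℓ k = ∑ k ∈ Finset.Icc 1 j, a k * ℓ k := by
      refine (Finset.sum_subset (Finset.Icc_subset_Icc_right h2) ?_).symm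
      intro x hx hx2
      simp only [Finset.mem_Icc] at hx hx2
      rw [htail x (by omega) (by omega), mul_zero]
    have hsplit2 : ∑ k ∈ Finset.Icc 1 j, a k * ℓ k
        = (∑ k ∈ Finset.Icc 1 (j-1), a k * ℓ k) + a j * ℓ j := by
      rw [show Finset.Icc 1 j = insert j (Finset.Icc 1 (j-1)) by
        ext x; simp [Finset.mem_Icc, Finset.mem_insert]; omega]
      rw [Finset.sum_insert (by simp [Finset.mem_Icc]; omega)]
      ring
    set T := ∑ k ∈ Finset.Icc 1 (j-1), a k * ℓ k with hT
    have hTd : dseq a (j-1) ∣ T := by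
      apply Finset.dvd_sum
      intro k hk
      simp only [Finset.mem_Icc] at hk
      exact Dvd.dvd.mul_right (dseq_dvd_a a (j-1) k hk.1 hk.2) _
    have hgj : dseq a j = Nat.gcd (dseq a (j-1)) (a j) := by
      have := dseq_succ a (j-1)
      rw [show j - 1 + 1 = j by omega] at this
      rw [this, Nat.gcd_comm]
    set g := dseq a j with hgdef
    set p := dseq a (j-1) / g with hpdef
    set q := a j / g with hqdef
    have hgpos : 0 < g := dseq_pos a ha1 j (by omega)
    have hgdp : g ∣ dseq a (j - 1) := by
      have := dseq_step_dvd a (j-1)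
      rwa [show j - 1 + 1 = j by omega] at this
    have hgda : g ∣ a j := dseq_dvd_a a j j (by omega) le_rfl
    have hgp : g * p = dseq a (j-1) := Nat.mul_div_cancel' hgdp
    have hgq : g * q = a j := Nat.mul_div_cancel' hgda
    have hcop : Nat.Coprime p q := by
      have h := Nat.coprime_div_gcd_div_gcd (m := dseq a (j-1)) (n := a j)
        (by rw [← hgj]; exact hgpos)
      rw [← hgj] at h
      exact h
    have hℓlt : ℓ j < p := hBlt j hj2 h2
    have hSeq : T + a j * ℓ j = a i * (dseq a (i-1) / dseq a i) := by
      rw [← hsplit2, ← hsplit, hSval]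
    rcases eq_or_lt_of_le h1 with heq | hij
    · -- j = i case; note p = dseq a (i-1) / dseq a i
      rw [heq] at hSeq
      have hSeq' : T + a j * ℓ j = a j * p := hSeq
      have hTeq : T = a j * (p - ℓ j) := by
        have hd : a j * (p - ℓ j) + a j * ℓ j = a j * p := by
          rw [← Nat.mul_add, Nat.sub_add_cancel (le_of_lt hℓlt)]
        have h9 : T + a j * ℓ j = a j * (p - ℓ j) + a j * ℓ j := by
          rw [hSeq', hd]
        exact Nat.add_right_cancel h9
      have h5 : dseq a (j-1) ∣ a j * (p - ℓ j) := hTeq ▸ hTd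
      have h6 : p ∣ q * (p - ℓ j) := by
        have : g * p ∣ g * (q * (p - ℓ j)) := by
          rw [hgp, ← mul_assoc, hgq]; exact h5
        exact (Nat.mul_dvd_mul_iff_left hgpos).mp this
      have h7 : p ∣ (p - ℓ j) := (Nat.Coprime.dvd_of_dvd_mul_left hcop h6)
      have := Nat.le_of_dvd (by omega) h7
      omega
    · -- i < j case
      have hdj1_ai : dseq a (j-1) ∣ a i := dseq_dvd_a a (j-1) i (by omega) (by omega)
      have hdj1_S : dseq a (j-1) ∣ a i * (dseq a (i-1) / dseq a i) := hdj1_ai.mul_right _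
      have h5 : dseq a (j-1) ∣ a j * ℓ j := by
        have h5' := Nat.dvd_sub hdj1_S hTd
        have h5'' : a i * (dseq a (i-1) / dseq a i) - T = a j * ℓ j :=
          Nat.sub_eq_of_eq_add (by rw [← hSeq, Nat.add_comm])
        rwa [h5''] at h5'
      have h6 : p ∣ q * ℓ j := by
        have : g * p ∣ g * (q * ℓ j) := by
          rw [hgp, ← mul_assoc, hgq]; exact h5
        exact (Nat.mul_dvd_mul_iff_left hgpos).mp this
      have h7 : p ∣ ℓ j := Nat.Coprime.dvd_of_dvd_mul_left hcop h6
      exact Nat.eq_zero_of_dvd_of_lt h7 hℓlt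
  -- downward induction
  have tail : ∀ t, ∀ j, i ≤ j → j ≤ m → m - j ≤ t → ℓ j = 0 := by
    intro t
    induction t with
    | zero =>
      intro j h1 h2 h3
      exact step j h1 h2 (fun k hk1 hk2 => (by omega : False).elim)
    | succ t ih =>
      intro j h1 h2 h3
      exact step j h1 h2 (fun k hk1 hk2 => ih k (by omega) hk2 (by omega))
  intro j hj
  rcases le_or_gt j m with h | h
  · exact tail (m - j) j hj h le_rfl
  · exact hB0 j (Or.inr h)

/-- Let `ℓmat i` (for `2 ≤ i ≤ m`) be the unique element of `B(A_m)` with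
`Σ_{j=1}^m a j * ℓmat i j = a i * d (i-1) / d i`, and let `b : ℕ → ℤ` satisfy
`a 1 * b 1 + ⋯ + a m * b m = −1`.  Let `D` be the `m × m` integer matrix whose
`r`-th row (for `r = 0, …, m−2`, corresponding to `i = r + 2`) is
`(−ℓ_{i,1}, …, −ℓ_{i,i−1}, d_{i−1}/d_i, 0, …, 0)` and whose last row is
`(b 1, …, b m)`.  Then `det D = (−1)^m`. -/
theorem det_D_eq_neg_one_pow (m : ℕ) (a : ℕ → ℕ) (hT : Telescopic m a)
    (ℓmat : ℕ → ℕ → ℕ)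
    (hℓ : ∀ i, 2 ≤ i → i ≤ m → BAm m a (ℓmat i) ∧
      dseq a i * ∑ j ∈ Finset.Icc 1 m, a j * ℓmat i j = a i * dseq a (i - 1))
    (b : ℕ → ℤ) (hb : ∑ j ∈ Finset.Icc 1 m, (a j : ℤ) * b j = -1)
    (D : Matrix (Fin m) (Fin m) ℤ)
    (hD : ∀ r c : Fin m, D r c =
      if r.val + 1 < m then
        (if c.val + 1 < r.val + 2 then -(ℓmat (r.val + 2) (c.val + 1) : ℤ)
         else if c.val + 1 = r.val + 2 then
           ((dseq a (r.val + 1) / dseq a (r.val + 2) : ℕ) : ℤ)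
         else 0)
      else (b (c.val + 1) : ℤ)) :
    D.det = (-1 : ℤ) ^ m := by
  obtain ⟨hm2, ha, hdm, -⟩ := hT
  have ha1 : 2 ≤ a 1 := ha 1 le_rfl (by omega)
  obtain ⟨n, rfl⟩ : ∃ n, m = n + 1 := ⟨m - 1, by omega⟩
  have key : ∀ i, 2 ≤ i → i ≤ n + 1 → (∀ j, i ≤ j → ℓmat i j = 0) ∧
      (∑ k ∈ Finset.Icc 1 (n+1), a k * ℓmat i k) = a i * (dseq a (i-1) / dseq a i) :=
    fun i h2 him =>
      key_lemma (n+1) a ha i h2 him (ℓmat i) (hℓ i h2 him).1 (hℓ i h2 him).2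
  set v : Fin (n+1) → ℤ := fun c => (a (c.val + 1) : ℤ) with hv
  have sum_conv : ∀ f : ℕ → ℤ,
      ∑ c : Fin (n+1), f (c.val + 1) = ∑ k ∈ Finset.Icc 1 (n+1), f k := by
    intro f
    rw [Fin.sum_univ_eq_sum_range (fun c => f (c+1)) (n+1),
      show Finset.Icc 1 (n+1) = Finset.Ico 1 (n+2) by rw [← Finset.Ico_add_one_right_eq_Icc]; rfl,
      Finset.sum_Ico_eq_sum_range]
    rw [show n + 2 - 1 = n + 1 by omega]
    exact Finset.sum_congr rfl (fun x _ => by rw [Nat.add_comm])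
  have hDv : D.mulVec v
      = fun r : Fin (n+1) => if (r : ℕ) + 1 < n + 1 then 0 else (-1 : ℤ) := by
    funext r
    show ∑ c : Fin (n+1), D r c * v c = _
    by_cases hr : (r : ℕ) + 1 < n + 1
    · rw [if_pos hr]
      obtain ⟨htail, hS⟩ := key ((r:ℕ)+2) (by omega) (by omega)
      have hterm : ∀ c : Fin (n+1), D r c * v c
          = (if (c:ℕ) + 1 = (r:ℕ) + 2 then
              (a ((r:ℕ)+2) : ℤ) * ((dseq a ((r:ℕ)+1) / dseq a ((r:ℕ)+2) : ℕ) : ℤ) else 0)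
            - (a ((c:ℕ)+1) : ℤ) * (ℓmat ((r:ℕ)+2) ((c:ℕ)+1) : ℤ) := by
        intro c
        rw [hD r c, if_pos hr]
        by_cases h1 : (c:ℕ) + 1 < (r:ℕ) + 2
        · rw [if_pos h1, if_neg (by omega)]
          show -(ℓmat ((r:ℕ)+2) ((c:ℕ)+1) : ℤ) * (a ((c:ℕ)+1) : ℤ) = _
          ring
        · by_cases h2 : (c:ℕ) + 1 = (r:ℕ) + 2
          · rw [if_neg h1, if_pos h2, if_pos h2]
            rw [htail ((c:ℕ)+1) (by omega)]
            show ((dseq a ((r:ℕ)+1) / dseq a ((r:ℕ)+2) : ℕ) : ℤ) * (a ((c:ℕ)+1) : ℤ) = _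
            rw [h2]
            push_cast
            ring
          · rw [if_neg h1, if_neg h2, if_neg h2]
            rw [htail ((c:ℕ)+1) (by omega)]
            show (0 : ℤ) * (a ((c:ℕ)+1) : ℤ) = _
            push_cast
            ring
      rw [Finset.sum_congr rfl (fun c _ => hterm c), Finset.sum_sub_distrib]
      have hfirst : ∑ c : Fin (n+1), (if (c:ℕ) + 1 = (r:ℕ) + 2 then
          (a ((r:ℕ)+2) : ℤ) * ((dseq a ((r:ℕ)+1) / dseq a ((r:ℕ)+2) : ℕ) : ℤ) else 0)
          = (a ((r:ℕ)+2) : ℤ) * ((dseq a ((r:ℕ)+1) / dseq a ((r:ℕ)+2) : ℕ) : ℤ) := by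
        rw [Finset.sum_eq_single (⟨(r:ℕ)+1, hr⟩ : Fin (n+1))]
        · rw [if_pos rfl]
        · intro c _ hc
          rw [if_neg (fun h => hc (Fin.ext (show (c:ℕ) = (r:ℕ)+1 by omega)))]
        · intro h
          exact absurd (Finset.mem_univ _) h
      have hsecond : ∑ c : Fin (n+1), (a ((c:ℕ)+1) : ℤ) * (ℓmat ((r:ℕ)+2) ((c:ℕ)+1) : ℤ)
          = (a ((r:ℕ)+2) : ℤ) * ((dseq a ((r:ℕ)+1) / dseq a ((r:ℕ)+2) : ℕ) : ℤ) := by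
        have hconv := sum_conv (fun k => ((a k * ℓmat ((r:ℕ)+2) k : ℕ) : ℤ))
        push_cast at hconv
        rw [hconv]
        have hcast : ((∑ k ∈ Finset.Icc 1 (n+1), a k * ℓmat ((r:ℕ)+2) k : ℕ) : ℤ)
            = ∑ x ∈ Finset.Icc 1 (n+1), (a x : ℤ) * (ℓmat ((r:ℕ)+2) x : ℤ) := by
          push_cast
          rfl
        rw [← hcast, hS, show (r:ℕ) + 2 - 1 = (r:ℕ)+1 by omega]
        push_cast
        ring
      rw [hfirst, hsecond]
      ring
    · rw [if_neg hr, ← hb]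
      rw [← sum_conv (fun k => (a k : ℤ) * b k)]
      refine Finset.sum_congr rfl (fun c _ => ?_)
      rw [hD r c, if_neg hr]
      ring
  have hadj : D.det • v
      = D.adjugate.mulVec
        (fun r : Fin (n+1) => if (r : ℕ) + 1 < n + 1 then 0 else (-1 : ℤ)) := by
    rw [← hDv, Matrix.mulVec_mulVec, Matrix.adjugate_mul, Matrix.smul_mulVec,
      Matrix.one_mulVec]
  have hlhs : (D.det • v) (0 : Fin (n+1)) = D.det * (a 1 : ℤ) := by
    simp [hv]
  have hrhs : D.adjugate.mulVec
      (fun r : Fin (n+1) => if (r : ℕ) + 1 < n + 1 then 0 else (-1 : ℤ)) (0 : Fin (n+1))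
      = - D.adjugate 0 (Fin.last n) := by
    show ∑ c : Fin (n+1), D.adjugate 0 c * (if (c : ℕ) + 1 < n + 1 then 0 else (-1 : ℤ)) = _
    rw [Finset.sum_eq_single (Fin.last n)]
    · rw [if_neg (by simp)]
      ring
    · intro c _ hc
      have hcn : (c : ℕ) ≠ n := fun h => hc (Fin.ext (h.trans (Fin.val_last n).symm))
      rw [if_pos (by have := c.isLt; omega), mul_zero]
    · intro h
      exact absurd (Finset.mem_univ _) h
  have hdet_a : D.det * (a 1 : ℤ) = - D.adjugate 0 (Fin.last n) := by
    rw [← hlhs, ← hrhs]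
    exact congrFun hadj 0
  rw [Matrix.adjugate_apply] at hdet_a
  set E := D.updateRow (Fin.last n) (Pi.single (0 : Fin (n+1)) 1) with hE
  have hEdet : E.det = (-1)^n * ∏ r : Fin n, E r.castSucc r.succ := by
    apply detAux
    · intro c
      rw [hE, Matrix.updateRow_self]
      simp only [Pi.single_apply, Fin.ext_iff, Fin.val_zero]
    · intro r c hrn hrc
      rw [hE, Matrix.updateRow_ne (by intro h; rw [h] at hrn; simp at hrn)]
      rw [hD r c, if_pos (by omega), if_neg (by omega), if_neg (by omega)]
  have hEentry : ∀ r : Fin n, E r.castSucc r.succ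
      = ((dseq a ((r:ℕ)+1) / dseq a ((r:ℕ)+2) : ℕ) : ℤ) := by
    intro r
    rw [hE, Matrix.updateRow_ne (Fin.castSucc_lt_last r).ne]
    rw [hD]
    simp only [Fin.coe_castSucc, Fin.val_succ]
    have hrn := r.isLt
    rw [if_pos (by omega), if_neg (by omega), if_pos trivial]
  have htel : ∀ t : ℕ, (∏ r ∈ Finset.range t, (dseq a (r+1) / dseq a (r+2)))
      * dseq a (t+1) = dseq a 1 := by
    intro t
    induction t with
    | zero => simp
    | succ t ih =>
      rw [Finset.prod_range_succ, mul_assoc, Nat.div_mul_cancel (dseq_step_dvd a (t+1))]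
      exact ih
  have hprodnat : ∏ r ∈ Finset.range n, (dseq a (r+1) / dseq a (r+2)) = a 1 := by
    have h := htel n
    rw [hdm, Nat.mul_one, dseq_one] at h
    exact h
  have hprod : ∏ r : Fin n, E r.castSucc r.succ = (a 1 : ℤ) := by
    rw [Finset.prod_congr rfl (fun r _ => hEentry r),
      Fin.prod_univ_eq_prod_range (fun r => ((dseq a (r+1) / dseq a (r+2) : ℕ) : ℤ)) n,
      ← Nat.cast_prod, hprodnat]
  rw [hEdet, hprod] at hdet_a
  have hane : (a 1 : ℤ) ≠ 0 := by
    have h1 : (0:ℤ) < (a 1 : ℤ) := by exact_mod_cast Nat.lt_of_lt_of_le Nat.zero_lt_two ha1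
    omega
  apply mul_right_cancel₀ hane
  rw [hdet_a, pow_succ]
  ring
end

section
/- Under the hypotheses on the Laurent series x_1(t), …, x_m(t), every coefficient p_{i,k} (1 ≤ i ≤ m, k ≥ 0) belongs to ℤ[λ], the subring of ℂ generated by all the coefficients λ^{(i)}_{j_1,…,j_m} of the defining equations. -/
open Finset

lemma dseq_dvd (a : ℕ → ℕ) {i j : ℕ} (h1 : 1 ≤ j) (h2 : j ≤ i) : dseq a i ∣ a j :=
  Finset.gcd_dvd (Finset.mem_Icc.2 ⟨h1, h2⟩)

lemma dseq_dvd_dseq (a : ℕ → ℕ) {i i' : ℕ} (h : i' ≤ i) : dseq a i ∣ dseq a i' :=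
  Finset.dvd_gcd fun j hj => dseq_dvd a (Finset.mem_Icc.1 hj).1 ((Finset.mem_Icc.1 hj).2.trans h)

lemma dseq_pos_s5 (a : ℕ → ℕ) (ha1 : 2 ≤ a 1) {i : ℕ} (hi : 1 ≤ i) : 0 < dseq a i := by
  rcases Nat.eq_zero_or_pos (dseq a i) with h | h
  · have h2 := dseq_dvd a le_rfl hi
    rw [h, zero_dvd_iff] at h2
    omega
  · exact h

lemma dseq_eq_gcd (a : ℕ → ℕ) {i : ℕ} (hi : 2 ≤ i) :
    dseq a i = Nat.gcd (a i) (dseq a (i - 1)) := by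
  have hIcc : Finset.Icc 1 i = insert i (Finset.Icc 1 (i - 1)) := by
    ext j
    simp only [Finset.mem_Icc, Finset.mem_insert]
    omega
  have : dseq a i = GCDMonoid.gcd (a i) (Finset.gcd (Finset.Icc 1 (i-1)) a) := by
    rw [dseq, hIcc, Finset.gcd_insert]
  exact this

lemma key_dvd (m : ℕ) (a : ℕ → ℕ) (ha1 : 2 ≤ a 1) {i : ℕ} (h2 : 2 ≤ i) (him : i ≤ m)
    (v : ℕ → ℤ) (hv : ∀ j, j < 1 ∨ i < j → v j = 0)
    (hsum : ∑ j ∈ Finset.Icc 1 m, (a j : ℤ) * v j = 0) :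
    ((dseq a (i - 1) / dseq a i : ℕ) : ℤ) ∣ v i := by
  set d := dseq a i with hd
  set D := dseq a (i - 1) with hD
  have hdpos : 0 < d := dseq_pos_s5 a ha1 (by omega)
  have hDpos : 0 < D := dseq_pos_s5 a ha1 (by omega)
  have hdD : d ∣ D := dseq_dvd_dseq a (by omega)
  -- restrict the sum
  have hres : ∑ j ∈ Finset.Icc 1 i, (a j : ℤ) * v j = 0 := by
    rw [← hsum]
    refine Finset.sum_subset (Finset.Icc_subset_Icc_right him) ?_
    intro j hj hj'
    simp only [Finset.mem_Icc] at hj hj'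
    rw [hv j (by omega), mul_zero]
  have hsplit : Finset.Icc 1 i = insert i (Finset.Icc 1 (i - 1)) := by
    ext j
    simp only [Finset.mem_Icc, Finset.mem_insert]
    omega
  have hnot : i ∉ Finset.Icc 1 (i - 1) := by simp only [Finset.mem_Icc]; omega
  rw [hsplit, Finset.sum_insert hnot] at hres
  have hdvdsum : (D : ℤ) ∣ ∑ j ∈ Finset.Icc 1 (i - 1), (a j : ℤ) * v j := by
    refine Finset.dvd_sum fun j hj => ?_
    simp only [Finset.mem_Icc] at hj
    exact Dvd.dvd.mul_right (Int.natCast_dvd_natCast.2 (dseq_dvd a hj.1 hj.2)) _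
  have hdvd : (D : ℤ) ∣ (a i : ℤ) * v i := by
    have : (a i : ℤ) * v i = -∑ j ∈ Finset.Icc 1 (i - 1), (a j : ℤ) * v j := by linarith
    rw [this]
    exact hdvdsum.neg_right
  -- cancel d
  have hai : d * (a i / d) = a i := Nat.mul_div_cancel' (dseq_dvd a (by omega) le_rfl)
  have hDd : d * (D / d) = D := Nat.mul_div_cancel' hdD
  have hdvd2 : ((D / d : ℕ) : ℤ) ∣ ((a i / d : ℕ) : ℤ) * v i := by
    obtain ⟨c, hc⟩ := hdvd
    have e1 : ((d : ℤ) * ((a i / d : ℕ) : ℤ)) = (a i : ℤ) := by exact_mod_cast hai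
    have e2 : ((d : ℤ) * ((D / d : ℕ) : ℤ)) = (D : ℤ) := by exact_mod_cast hDd
    have h1 : (d : ℤ) * (((a i / d : ℕ) : ℤ) * v i) = (d : ℤ) * (((D / d : ℕ) : ℤ) * c) := by
      rw [← mul_assoc, ← mul_assoc, e1, e2, hc]
    have hd0 : (d : ℤ) ≠ 0 := by positivity
    exact ⟨c, mul_left_cancel₀ hd0 h1⟩
  have hcop : IsCoprime ((D / d : ℕ) : ℤ) ((a i / d : ℕ) : ℤ) := by
    rw [Nat.isCoprime_iff_coprime]
    have := Nat.coprime_div_gcd_div_gcd (m := a i) (n := D) (by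
      rw [← dseq_eq_gcd a h2]; exact hdpos)
    rw [← dseq_eq_gcd a h2] at this
    exact this.symm
  exact hcop.dvd_of_dvd_mul_left hdvd2

lemma elim_group {G : Type*} [CommGroup G] (m : ℕ) (a : ℕ → ℕ) (ha1 : 2 ≤ a 1)
    (hm : 1 ≤ m) (ℓmat : ℕ → ℕ → ℕ)
    (hLsupp : ∀ i, 2 ≤ i → i ≤ m → ∀ j, (j < 1 ∨ i ≤ j) → ℓmat i j = 0)
    (hweight : ∀ i, 2 ≤ i → i ≤ m →
      a i * (dseq a (i-1) / dseq a i) = ∑ j ∈ Finset.Icc 1 (i-1), a j * ℓmat i j)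
    (b : ℕ → ℤ) (hb : ∑ j ∈ Finset.Icc 1 m, (a j : ℤ) * b j = -1)
    (g : ℕ → G)
    (hg1 : ∀ i, 2 ≤ i → i ≤ m →
      g i ^ (dseq a (i-1) / dseq a i) = ∏ j ∈ Finset.Icc 1 (i-1), g j ^ ℓmat i j)
    (hg0 : ∏ j ∈ Finset.Icc 1 m, g j ^ b j = 1) :
    ∀ j, 1 ≤ j → j ≤ m → g j = 1 := by
  have step1 : ∀ i, 1 ≤ i → i ≤ m → ∀ v : ℕ → ℤ, (∀ j, j < 1 ∨ i < j → v j = 0) →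
      (∑ j ∈ Finset.Icc 1 m, (a j : ℤ) * v j = 0) →
      ∏ j ∈ Finset.Icc 1 m, g j ^ v j = 1 := by
    intro i hi
    induction i, hi using Nat.le_induction with
    | base =>
      intro _ v hv hsum
      have h1m : (1 : ℕ) ∈ Finset.Icc 1 m := Finset.mem_Icc.2 ⟨le_rfl, hm⟩
      have hs : ∑ j ∈ Finset.Icc 1 m, (a j : ℤ) * v j = (a 1 : ℤ) * v 1 := by
        refine Finset.sum_eq_single_of_mem 1 h1m ?_
        intro j hj hj1
        simp only [Finset.mem_Icc] at hj
        rw [hv j (by omega), mul_zero]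
      rw [hs] at hsum
      have hv1 : v 1 = 0 := by
        rcases mul_eq_zero.1 hsum with h | h
        · exfalso; have : (a 1 : ℤ) ≠ 0 := by positivity
          exact this h
        · exact h
      refine Finset.prod_eq_one fun j hj => ?_
      simp only [Finset.mem_Icc] at hj
      rcases eq_or_ne j 1 with rfl | hne
      · rw [hv1, zpow_zero]
      · rw [hv j (by omega), zpow_zero]
    | succ i hi IH =>
      intro him v hv hsum
      have him' : i ≤ m := by omega
      have h2 : 2 ≤ i + 1 := by omega
      obtain ⟨q, hq⟩ := key_dvd m a ha1 h2 him v hv hsum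
      set n : ℕ := dseq a ((i+1)-1) / dseq a (i+1) with hn
      set Rr : ℕ → ℤ := fun j => if j = i + 1 then (n : ℤ) else -(ℓmat (i+1) j : ℤ) with hRr
      set v' : ℕ → ℤ := fun j => v j - q * Rr j with hv'
      have hRi : Rr (i+1) = (n : ℤ) := by simp [hRr]
      have hRo : ∀ j, j ≠ i + 1 → Rr j = -(ℓmat (i+1) j : ℤ) := by
        intro j hj; simp [hRr, hj]
      have hsupp' : ∀ j, j < 1 ∨ i < j → v' j = 0 := by
        intro j hj
        rcases hj with hj | hj
        · have e := hRo j (by omega)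
          simp only [hv']
          rw [hv j (Or.inl hj), e, hLsupp (i+1) h2 him j (Or.inl hj)]
          simp
        · rcases eq_or_ne j (i+1) with rfl | hne
          · simp only [hv']
            rw [hq, hRi]; ring
          · have e := hRo j hne
            simp only [hv']
            rw [hv j (Or.inr (by omega)), e, hLsupp (i+1) h2 him j (Or.inr (by omega))]
            simp
      have hi1m : (i+1) ∈ Finset.Icc 1 m := Finset.mem_Icc.2 ⟨by omega, him⟩
      have hsub : Finset.Icc 1 i ⊆ (Finset.Icc 1 m).erase (i+1) := by
        intro j hj
        simp only [Finset.mem_Icc] at hj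
        exact Finset.mem_erase.2 ⟨by omega, Finset.mem_Icc.2 ⟨hj.1, by omega⟩⟩
      have hRsum : ∑ j ∈ Finset.Icc 1 m, (a j : ℤ) * Rr j = 0 := by
        rw [← Finset.add_sum_erase _ _ hi1m, hRi]
        have e1 : ∑ j ∈ (Finset.Icc 1 m).erase (i+1), (a j : ℤ) * Rr j
            = ∑ j ∈ Finset.Icc 1 i, (a j : ℤ) * Rr j := by
          refine (Finset.sum_subset hsub ?_).symm
          intro j hj hj'
          simp only [Finset.mem_erase, Finset.mem_Icc] at hj
          simp only [Finset.mem_Icc] at hj'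
          rw [hRo j hj.1, hLsupp (i+1) h2 him j (Or.inr (by omega))]
          simp
        have e2 : ∀ j ∈ Finset.Icc 1 i, (a j : ℤ) * Rr j
            = -((a j : ℤ) * (ℓmat (i+1) j : ℤ)) := by
          intro j hj
          simp only [Finset.mem_Icc] at hj
          rw [hRo j (by omega)]
          ring
        rw [e1, Finset.sum_congr rfl e2, Finset.sum_neg_distrib]
        have e3 : ∑ j ∈ Finset.Icc 1 i, (a j : ℤ) * (ℓmat (i+1) j : ℤ)
            = ((a (i+1)) * n : ℕ) := by
          have := hweight (i+1) h2 him
          simp only [Nat.add_sub_cancel] at this ⊢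
          rw [hn]
          simp only [Nat.add_sub_cancel]
          rw [this]
          push_cast
          rfl
        rw [e3]
        push_cast
        ring
      have hsum' : ∑ j ∈ Finset.Icc 1 m, (a j : ℤ) * v' j = 0 := by
        have e : ∀ j ∈ Finset.Icc 1 m, (a j : ℤ) * v' j
            = (a j : ℤ) * v j - q * ((a j : ℤ) * Rr j) := by
          intro j _; simp only [hv']; ring
        rw [Finset.sum_congr rfl e, Finset.sum_sub_distrib, hsum, ← Finset.mul_sum, hRsum]
        ring
      have hRprod : ∏ j ∈ Finset.Icc 1 m, g j ^ Rr j = 1 := by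
        rw [← Finset.mul_prod_erase _ _ hi1m, hRi]
        have e1 : ∏ j ∈ (Finset.Icc 1 m).erase (i+1), g j ^ Rr j
            = ∏ j ∈ Finset.Icc 1 i, g j ^ Rr j := by
          refine (Finset.prod_subset hsub ?_).symm
          intro j hj hj'
          simp only [Finset.mem_erase, Finset.mem_Icc] at hj
          simp only [Finset.mem_Icc] at hj'
          rw [hRo j hj.1, hLsupp (i+1) h2 him j (Or.inr (by omega))]
          simp
        have e2 : ∀ j ∈ Finset.Icc 1 i, g j ^ Rr j = (g j ^ (ℓmat (i+1) j : ℤ))⁻¹ := by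
          intro j hj
          simp only [Finset.mem_Icc] at hj
          rw [hRo j (by omega), zpow_neg]
        rw [e1, Finset.prod_congr rfl e2, Finset.prod_inv_distrib]
        have e3 : ∏ j ∈ Finset.Icc 1 i, g j ^ (ℓmat (i+1) j : ℤ)
            = ∏ j ∈ Finset.Icc 1 i, g j ^ (ℓmat (i+1) j) := by
          refine Finset.prod_congr rfl fun j _ => ?_
          rw [zpow_natCast]
        rw [e3]
        have e4 := hg1 (i+1) h2 him
        simp only [Nat.add_sub_cancel] at e4
        rw [hn]
        simp only [Nat.add_sub_cancel]
        rw [zpow_natCast, e4, ← e4]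
        rw [e4, mul_inv_cancel]
      have hvv : ∀ j ∈ Finset.Icc 1 m, g j ^ v j = g j ^ v' j * (g j ^ Rr j) ^ q := by
        intro j _
        rw [← zpow_mul, ← zpow_add]
        congr 1
        simp only [hv']
        ring
      rw [Finset.prod_congr rfl hvv, Finset.prod_mul_distrib, Finset.prod_zpow, hRprod,
        one_zpow, mul_one]
      exact IH him' v' hsupp' hsum'
  -- step 2
  intro j0 hj01 hj0m
  have hj0mem : j0 ∈ Finset.Icc 1 m := Finset.mem_Icc.2 ⟨hj01, hj0m⟩
  set w : ℕ → ℤ := fun j =>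
    (if j = j0 then 1 else 0) + (if j ∈ Finset.Icc 1 m then (a j0 : ℤ) * b j else 0) with hw
  have hwsupp : ∀ j, j < 1 ∨ m < j → w j = 0 := by
    intro j hj
    have h1 : j ≠ j0 := by
      intro h; subst h; simp only [Finset.mem_Icc] at hj0mem; omega
    have h2 : j ∉ Finset.Icc 1 m := by simp only [Finset.mem_Icc]; omega
    simp only [hw]
    rw [if_neg h1, if_neg h2, add_zero]
  have hwsum : ∑ j ∈ Finset.Icc 1 m, (a j : ℤ) * w j = 0 := by
    have e : ∀ j ∈ Finset.Icc 1 m, (a j : ℤ) * w j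
        = (a j : ℤ) * (if j = j0 then 1 else 0) + (a j0 : ℤ) * ((a j : ℤ) * b j) := by
      intro j hj
      simp only [hw, if_pos hj]
      ring
    rw [Finset.sum_congr rfl e, Finset.sum_add_distrib, ← Finset.mul_sum, hb]
    have e2 : ∑ j ∈ Finset.Icc 1 m, (a j : ℤ) * (if j = j0 then 1 else 0) = (a j0 : ℤ) := by
      rw [Finset.sum_eq_single_of_mem j0 hj0mem]
      · simp
      · intro j _ hne; simp [hne]
    rw [e2]
    ring
  have h1 := step1 m hm le_rfl w hwsupp hwsum
  have e : ∀ j ∈ Finset.Icc 1 m, g j ^ w j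
      = g j ^ (if j = j0 then (1:ℤ) else 0) * (g j ^ b j) ^ (a j0 : ℤ) := by
    intro j hj
    rw [← zpow_mul, ← zpow_add]
    simp only [hw, if_pos hj]
    ring_nf
  rw [Finset.prod_congr rfl e, Finset.prod_mul_distrib, Finset.prod_zpow, hg0, one_zpow,
    mul_one] at h1
  rw [Finset.prod_eq_single_of_mem j0 hj0mem ?side] at h1
  · simpa using h1
  · intro j _ hne; simp [hne]
lemma elim_mul (m : ℕ) (a : ℕ → ℕ) (ha1 : 2 ≤ a 1) (hm : 1 ≤ m) (ℓmat : ℕ → ℕ → ℕ)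
    (hLsupp : ∀ i, 2 ≤ i → i ≤ m → ∀ j, (j < 1 ∨ i ≤ j) → ℓmat i j = 0)
    (hweight : ∀ i, 2 ≤ i → i ≤ m →
      a i * (dseq a (i-1) / dseq a i) = ∑ j ∈ Finset.Icc 1 (i-1), a j * ℓmat i j)
    (b : ℕ → ℤ) (hb : ∑ j ∈ Finset.Icc 1 m, (a j : ℤ) * b j = -1)
    (π : ℕ → ℂ) (hπ : ∀ j, 1 ≤ j → j ≤ m → π j ≠ 0)
    (h1 : ∀ i, 2 ≤ i → i ≤ m →
      π i ^ (dseq a (i-1) / dseq a i) = ∏ j ∈ Finset.Icc 1 (i-1), π j ^ ℓmat i j)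
    (h0 : ∏ j ∈ Finset.Icc 1 m, π j ^ (b j) = 1) :
    ∀ j, 1 ≤ j → j ≤ m → π j = 1 := by
  set g : ℕ → ℂˣ := fun j =>
    if h : 1 ≤ j ∧ j ≤ m then Units.mk0 (π j) (hπ j h.1 h.2) else 1 with hg
  have hgval : ∀ j, 1 ≤ j → j ≤ m → ((g j : ℂ)) = π j := by
    intro j h1' h2'
    simp [hg, dif_pos (And.intro h1' h2')]
  have hmain := elim_group m a ha1 hm ℓmat hLsupp hweight b hb g ?_ ?_
  · intro j hj1 hjm
    have := hmain j hj1 hjm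
    have hv := hgval j hj1 hjm
    rw [this] at hv
    simpa using hv.symm
  · intro i h2 him
    apply Units.ext
    push_cast [Units.val_pow_eq_pow_val]
    rw [hgval i (by omega) him]
    rw [h1 i h2 him]
    refine Finset.prod_congr rfl fun j hj => ?_
    simp only [Finset.mem_Icc] at hj
    rw [hgval j hj.1 (by omega)]
  · apply Units.ext
    push_cast [Units.val_zpow_eq_zpow_val]
    rw [← h0]
    refine Finset.prod_congr rfl fun j hj => ?_
    simp only [Finset.mem_Icc] at hj
    rw [hgval j hj.1 hj.2]


lemma elim_add (m : ℕ) (a : ℕ → ℕ) (ha1 : 2 ≤ a 1) (hm : 1 ≤ m) (ℓmat : ℕ → ℕ → ℕ)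
    (hLsupp : ∀ i, 2 ≤ i → i ≤ m → ∀ j, (j < 1 ∨ i ≤ j) → ℓmat i j = 0)
    (hweight : ∀ i, 2 ≤ i → i ≤ m →
      a i * (dseq a (i-1) / dseq a i) = ∑ j ∈ Finset.Icc 1 (i-1), a j * ℓmat i j)
    (b : ℕ → ℤ) (hb : ∑ j ∈ Finset.Icc 1 m, (a j : ℤ) * b j = -1)
    (R : Subring ℂ) (u : ℕ → ℂ)
    (h1 : ∀ i, 2 ≤ i → i ≤ m →
      ((dseq a (i-1) / dseq a i : ℕ) : ℂ) * u i
        - ∑ j ∈ Finset.Icc 1 (i-1), (ℓmat i j : ℂ) * u j ∈ R)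
    (h0 : ∑ j ∈ Finset.Icc 1 m, (b j : ℂ) * u j ∈ R) :
    ∀ j, 1 ≤ j → j ≤ m → u j ∈ R := by
  set S : AddSubgroup ℂ := R.toAddSubgroup with hS
  set φ : ℂ →+ ℂ ⧸ S := QuotientAddGroup.mk' S with hφ
  have hmem : ∀ z : ℂ, z ∈ R → φ z = 0 := by
    intro z hz
    exact (QuotientAddGroup.eq_zero_iff z).2 hz
  set g : ℕ → Multiplicative (ℂ ⧸ S) := fun j => Multiplicative.ofAdd (φ (u j)) with hg
  have hmain := elim_group m a ha1 hm ℓmat hLsupp hweight b hb g ?_ ?_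
  · intro j hj1 hjm
    have h := hmain j hj1 hjm
    have h' : φ (u j) = 0 := h
    exact (QuotientAddGroup.eq_zero_iff (u j)).1 h'
  · intro i h2 him
    have key : φ (((dseq a (i-1) / dseq a i : ℕ) : ℂ) * u i)
        = φ (∑ j ∈ Finset.Icc 1 (i-1), (ℓmat i j : ℂ) * u j) := by
      have hz := hmem _ (h1 i h2 him)
      rw [map_sub] at hz
      exact sub_eq_zero.1 hz
    show Multiplicative.ofAdd (φ (u i)) ^ (dseq a (i-1) / dseq a i)
        = ∏ j ∈ Finset.Icc 1 (i-1), Multiplicative.ofAdd (φ (u j)) ^ ℓmat i j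
    have e1 : ∀ j ∈ Finset.Icc 1 (i-1), Multiplicative.ofAdd (φ (u j)) ^ ℓmat i j
        = Multiplicative.ofAdd ((ℓmat i j) • φ (u j)) := by
      intro j _
      rw [ofAdd_nsmul]
    rw [Finset.prod_congr rfl e1, ← ofAdd_sum, ← ofAdd_nsmul]
    congr 1
    have e2 : ∑ j ∈ Finset.Icc 1 (i-1), (ℓmat i j) • φ (u j)
        = φ (∑ j ∈ Finset.Icc 1 (i-1), (ℓmat i j : ℂ) * u j) := by
      rw [map_sum]
      refine Finset.sum_congr rfl fun j _ => ?_
      rw [← map_nsmul, nsmul_eq_mul]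
    rw [e2, ← key, ← map_nsmul, nsmul_eq_mul]
  · show ∏ j ∈ Finset.Icc 1 m, Multiplicative.ofAdd (φ (u j)) ^ (b j) = 1
    have e1 : ∀ j ∈ Finset.Icc 1 m, Multiplicative.ofAdd (φ (u j)) ^ (b j)
        = Multiplicative.ofAdd ((b j) • φ (u j)) := by
      intro j _
      rw [ofAdd_zsmul]
    rw [Finset.prod_congr rfl e1, ← ofAdd_sum]
    have e2 : ∑ j ∈ Finset.Icc 1 m, (b j) • φ (u j)
        = φ (∑ j ∈ Finset.Icc 1 m, (b j : ℂ) * u j) := by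
      rw [map_sum]
      refine Finset.sum_congr rfl fun j _ => ?_
      rw [← map_zsmul, zsmul_eq_mul]
    rw [e2, hmem _ h0]
    rfl


lemma ps_mem_mul (R : Subring ℂ) {k : ℕ} {f g : PowerSeries ℂ}
    (hf : ∀ l, l < k → PowerSeries.coeff l f ∈ R)
    (hg : ∀ l, l < k → PowerSeries.coeff l g ∈ R) :
    ∀ l, l < k → PowerSeries.coeff l (f * g) ∈ R := by
  intro l hl
  rw [PowerSeries.coeff_mul]
  refine Subring.sum_mem _ fun p hp => ?_
  rw [Finset.HasAntidiagonal.mem_antidiagonal] at hp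
  exact R.mul_mem (hf p.1 (by omega)) (hg p.2 (by omega))

lemma ps_mem_one (R : Subring ℂ) {k : ℕ} :
    ∀ l, l < k → PowerSeries.coeff l (1 : PowerSeries ℂ) ∈ R := by
  intro l _
  rw [PowerSeries.coeff_one]
  split
  · exact R.one_mem
  · exact R.zero_mem

lemma ps_mem_pow (R : Subring ℂ) {k : ℕ} {f : PowerSeries ℂ}
    (hf : ∀ l, l < k → PowerSeries.coeff l f ∈ R) (c : ℕ) :
    ∀ l, l < k → PowerSeries.coeff l (f ^ c) ∈ R := by
  induction c with
  | zero => simpa using ps_mem_one R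
  | succ c ih =>
    rw [pow_succ]
    exact ps_mem_mul R ih hf

lemma ps_mem_prodpow (R : Subring ℂ) {k : ℕ} (s : Finset ℕ) (F : ℕ → PowerSeries ℂ) (c : ℕ → ℕ)
    (h : ∀ j ∈ s, ∀ l, l < k → PowerSeries.coeff l (F j) ∈ R) :
    ∀ l, l < k → PowerSeries.coeff l (∏ j ∈ s, F j ^ c j) ∈ R := by
  classical
  induction s using Finset.induction_on with
  | empty => simpa using ps_mem_one R
  | @insert a s ha ih =>
    rw [Finset.prod_insert ha]
    exact ps_mem_mul R (ps_mem_pow R (h a (Finset.mem_insert_self a s)) (c a))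
      (ih fun j hj => h j (Finset.mem_insert_of_mem hj))

lemma ps_mem_Xpow (R : Subring ℂ) {k : ℕ} (e : ℕ) :
    ∀ l, l < k → PowerSeries.coeff l ((PowerSeries.X : PowerSeries ℂ) ^ e) ∈ R := by
  intro l _
  rw [PowerSeries.coeff_X_pow]
  split
  · exact R.one_mem
  · exact R.zero_mem

lemma ps_dcoeff_mul (R : Subring ℂ) {k : ℕ} (hk : k ≠ 0) {f g : PowerSeries ℂ}
    (hf0 : PowerSeries.constantCoeff f = 1) (hg0 : PowerSeries.constantCoeff g = 1)
    (hf : ∀ l, l < k → PowerSeries.coeff l f ∈ R)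
    (hg : ∀ l, l < k → PowerSeries.coeff l g ∈ R) :
    PowerSeries.coeff k (f * g)
      - (PowerSeries.coeff k f + PowerSeries.coeff k g) ∈ R := by
  rw [PowerSeries.coeff_mul]
  have h1 : ((k, 0) : ℕ × ℕ) ∈ Finset.HasAntidiagonal.antidiagonal k := by
    rw [Finset.HasAntidiagonal.mem_antidiagonal]; simp
  have h2 : ((0, k) : ℕ × ℕ) ∈ (Finset.HasAntidiagonal.antidiagonal k).erase (k, 0) := by
    refine Finset.mem_erase.2 ⟨?_, by rw [Finset.HasAntidiagonal.mem_antidiagonal]; simp⟩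
    simp only [ne_eq, Prod.mk.injEq, not_and]
    intro h; omega
  rw [← Finset.add_sum_erase _ _ h1, ← Finset.add_sum_erase _ _ h2]
  have e1 : PowerSeries.coeff (k, 0).1 f * PowerSeries.coeff (k, 0).2 g
      = PowerSeries.coeff k f := by
    simp [PowerSeries.coeff_zero_eq_constantCoeff, hg0]
  have e2 : PowerSeries.coeff (0, k).1 f * PowerSeries.coeff (0, k).2 g
      = PowerSeries.coeff k g := by
    simp [PowerSeries.coeff_zero_eq_constantCoeff, hf0]
  rw [e1, e2]
  have e3 : PowerSeries.coeff k f + (PowerSeries.coeff k g +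
      ∑ p ∈ ((Finset.HasAntidiagonal.antidiagonal k).erase (k, 0)).erase (0, k),
        PowerSeries.coeff p.1 f * PowerSeries.coeff p.2 g)
      - (PowerSeries.coeff k f + PowerSeries.coeff k g)
      = ∑ p ∈ ((Finset.HasAntidiagonal.antidiagonal k).erase (k, 0)).erase (0, k),
        PowerSeries.coeff p.1 f * PowerSeries.coeff p.2 g := by ring
  rw [e3]
  refine Subring.sum_mem _ fun p hp => ?_
  have hp1 := Finset.mem_erase.1 hp
  have hp2 := Finset.mem_erase.1 hp1.2
  rw [Finset.HasAntidiagonal.mem_antidiagonal] at hp2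
  have hne1 : p ≠ (0, k) := hp1.1
  have hne2 : p ≠ (k, 0) := hp2.1
  have hp1lt : p.1 < k := by
    rcases Nat.lt_or_ge p.1 k with h | h
    · exact h
    · exfalso; apply hne2
      have : p.1 = k := by omega
      have : p.2 = 0 := by omega
      exact Prod.ext (by omega) this
  have hp2lt : p.2 < k := by
    rcases Nat.lt_or_ge p.2 k with h | h
    · exact h
    · exfalso; apply hne1
      exact Prod.ext (by omega) (by omega)
  exact R.mul_mem (hf p.1 hp1lt) (hg p.2 hp2lt)

lemma ps_dcoeff_pow (R : Subring ℂ) {k : ℕ} (hk : k ≠ 0) {f : PowerSeries ℂ}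
    (hf0 : PowerSeries.constantCoeff f = 1)
    (hf : ∀ l, l < k → PowerSeries.coeff l f ∈ R) (c : ℕ) :
    PowerSeries.coeff k (f ^ c) - (c : ℂ) * PowerSeries.coeff k f ∈ R := by
  induction c with
  | zero =>
    simp only [pow_zero, Nat.cast_zero, zero_mul, sub_zero]
    rw [PowerSeries.coeff_one, if_neg hk]
    exact R.zero_mem
  | succ c ih =>
    have hfc0 : PowerSeries.constantCoeff (f ^ c) = 1 := by rw [map_pow, hf0, one_pow]
    have hfc := ps_mem_pow R hf c
    have h2 := ps_dcoeff_mul R hk hfc0 hf0 hfc hf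
    have e : PowerSeries.coeff k (f ^ (c + 1)) - ((c : ℂ) + 1) * PowerSeries.coeff k f
        = (PowerSeries.coeff k (f ^ c * f)
            - (PowerSeries.coeff k (f ^ c) + PowerSeries.coeff k f))
          + (PowerSeries.coeff k (f ^ c) - (c : ℂ) * PowerSeries.coeff k f) := by
      rw [pow_succ]
      ring
    have := R.add_mem h2 ih
    rw [← e] at this
    simpa using this

lemma ps_dcoeff_prod (R : Subring ℂ) {k : ℕ} (hk : k ≠ 0) (s : Finset ℕ)
    (F : ℕ → PowerSeries ℂ) (c : ℕ → ℕ)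
    (h0 : ∀ j ∈ s, PowerSeries.constantCoeff (F j) = 1)
    (h : ∀ j ∈ s, ∀ l, l < k → PowerSeries.coeff l (F j) ∈ R) :
    PowerSeries.coeff k (∏ j ∈ s, F j ^ c j)
      - ∑ j ∈ s, (c j : ℂ) * PowerSeries.coeff k (F j) ∈ R := by
  classical
  induction s using Finset.induction_on with
  | empty =>
    simp only [Finset.prod_empty, Finset.sum_empty, sub_zero]
    rw [PowerSeries.coeff_one, if_neg hk]
    exact R.zero_mem
  | @insert a s ha ih =>
    rw [Finset.prod_insert ha, Finset.sum_insert ha]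
    have hP0 : PowerSeries.constantCoeff (∏ j ∈ s, F j ^ c j) = 1 := by
      rw [map_prod]
      refine Finset.prod_eq_one fun j hj => ?_
      rw [map_pow, h0 j (Finset.mem_insert_of_mem hj), one_pow]
    have hPmem := ps_mem_prodpow R s F c fun j hj => h j (Finset.mem_insert_of_mem hj)
    have hfa0 : PowerSeries.constantCoeff (F a ^ c a) = 1 := by
      rw [map_pow, h0 a (Finset.mem_insert_self a s), one_pow]
    have hd := ps_dcoeff_mul R hk hfa0 hP0
      (ps_mem_pow R (h a (Finset.mem_insert_self a s)) (c a)) hPmem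
    have hp := ps_dcoeff_pow R hk (h0 a (Finset.mem_insert_self a s))
      (h a (Finset.mem_insert_self a s)) (c a)
    have hs := ih (fun j hj => h0 j (Finset.mem_insert_of_mem hj))
      (fun j hj => h j (Finset.mem_insert_of_mem hj))
    have e : PowerSeries.coeff k (F a ^ c a * ∏ j ∈ s, F j ^ c j)
        - ((c a : ℂ) * PowerSeries.coeff k (F a)
            + ∑ j ∈ s, (c j : ℂ) * PowerSeries.coeff k (F j))
        = (PowerSeries.coeff k (F a ^ c a * ∏ j ∈ s, F j ^ c j)
            - (PowerSeries.coeff k (F a ^ c a)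
              + PowerSeries.coeff k (∏ j ∈ s, F j ^ c j)))
          + (PowerSeries.coeff k (F a ^ c a) - (c a : ℂ) * PowerSeries.coeff k (F a))
          + (PowerSeries.coeff k (∏ j ∈ s, F j ^ c j)
              - ∑ j ∈ s, (c j : ℂ) * PowerSeries.coeff k (F j)) := by
      ring
    rw [e]
    exact R.add_mem (R.add_mem hd hp) hs

lemma coe_coeff_neg (f : PowerSeries ℂ) (n : ℤ) (hn : n < 0) :
    (HahnSeries.ofPowerSeries ℤ ℂ f).coeff n = 0 := by
  rw [HahnSeries.ofPowerSeries_apply]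
  apply HahnSeries.embDomain_notin_range
  rintro ⟨k, hk⟩
  simp at hk
  omega


lemma ps_mem_Xpow_mul (R : Subring ℂ) {k e : ℕ} (he : 1 ≤ e) {f : PowerSeries ℂ}
    (hf : ∀ l, l < k → PowerSeries.coeff l f ∈ R) :
    PowerSeries.coeff k (PowerSeries.X ^ e * f) ∈ R := by
  rcases le_or_gt e k with h | h
  · have hk : k = (k - e) + e := by omega
    rw [hk, PowerSeries.coeff_X_pow_mul]
    exact hf (k - e) (by omega)
  · rw [PowerSeries.coeff_mul]
    refine Subring.sum_mem _ fun p hp => ?_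
    rw [Finset.HasAntidiagonal.mem_antidiagonal] at hp
    rw [PowerSeries.coeff_X_pow, if_neg (by omega), zero_mul]
    exact R.zero_mem

/-- Under the hypotheses on the Laurent series `x 1, …, x m` (cf. the arithmetic
local parameter setting: `x i = t^{−a i}·Σ_{k≥0} p_{i,k} t^k` with `p_{i,0} ≠ 0`,
the defining equations `F_i(x 1, …, x m) = 0` of the telescopic curve hold, and
`x 1 ^ b 1 ⋯ x m ^ b m = t` with `Σ a j * b j = −1`), every coefficient
`p_{i,k} = (x i).coeff (−a i + k)` belongs to `ℤ[λ]`, the subring of `ℂ` generated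
by all the coefficients `λ^{(i)}_J` of the defining equations. -/
theorem coeff_mem_lambda_ring (m : ℕ) (a : ℕ → ℕ) (hT : Telescopic m a)
    (ℓmat : ℕ → ℕ → ℕ)
    (hℓ : ∀ i, 2 ≤ i → i ≤ m → BAm m a (ℓmat i) ∧
      dseq a i * ∑ j ∈ Finset.Icc 1 m, a j * ℓmat i j = a i * dseq a (i - 1))
    (lam : ℕ → (ℕ → ℕ) → ℂ)
    (S : ℕ → Finset (ℕ → ℕ))
    (hS : ∀ i, 2 ≤ i → i ≤ m → ∀ J : ℕ → ℕ, J ∈ S i ↔ (BAm m a J ∧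
      dseq a i * ∑ k ∈ Finset.Icc 1 m, a k * J k < a i * dseq a (i - 1)))
    (b : ℕ → ℤ) (hb : ∑ j ∈ Finset.Icc 1 m, (a j : ℤ) * b j = -1)
    (x : ℕ → LaurentSeries ℂ)
    (hord : ∀ i, 1 ≤ i → i ≤ m → ∀ n : ℤ, n < -(a i : ℤ) → (x i).coeff n = 0)
    (hlead : ∀ i, 1 ≤ i → i ≤ m → (x i).coeff (-(a i : ℤ)) ≠ 0)
    (hF : ∀ i, 2 ≤ i → i ≤ m →
      x i ^ (dseq a (i - 1) / dseq a i) =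
        ∏ j ∈ Finset.Icc 1 (i - 1), x j ^ ℓmat i j +
          ∑ J ∈ S i, lam i J • ∏ j ∈ Finset.Icc 1 m, x j ^ J j)
    (ht : ∏ j ∈ Finset.Icc 1 m, x j ^ b j = HahnSeries.single (1 : ℤ) (1 : ℂ)) :
    ∀ i, 1 ≤ i → i ≤ m → ∀ k : ℕ, (x i).coeff (-(a i : ℤ) + k) ∈
      Subring.closure {z : ℂ | ∃ i, 2 ≤ i ∧ i ≤ m ∧ ∃ J ∈ S i, z = lam i J} := by
  classical
  obtain ⟨hm2, ha, hdm, htel⟩ := hT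
  have hm1 : 1 ≤ m := by omega
  have ha1 : 2 ≤ a 1 := ha 1 le_rfl (by omega)
  set R := Subring.closure {z : ℂ | ∃ i, 2 ≤ i ∧ i ≤ m ∧ ∃ J ∈ S i, z = lam i J} with hRdef
  set Φ := HahnSeries.ofPowerSeries ℤ ℂ with hΦ
  set Y : ℕ → PowerSeries ℂ := fun i => PowerSeries.mk fun k => (x i).coeff (-(a i : ℤ) + k)
    with hYdef
  have hYcoeff : ∀ i k, PowerSeries.coeff k (Y i) = (x i).coeff (-(a i : ℤ) + k) := by
    intro i k
    simp [hYdef]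
  have hmulsingle : ∀ (z : LaurentSeries ℂ) (α : ℤ) (n : ℤ),
      (z * HahnSeries.single α (1:ℂ)).coeff n = z.coeff (n - α) := by
    intro z α n
    have h := HahnSeries.coeff_mul_single_add (r := (1:ℂ)) (x := z) (a := n - α) (b := α)
    rw [sub_add_cancel] at h
    rw [h, mul_one]
  have hYx : ∀ i, 1 ≤ i → i ≤ m → Φ (Y i) = x i * HahnSeries.single (a i : ℤ) 1 := by
    intro i h1 h2
    ext n
    rcases lt_or_ge n 0 with hn | hn
    · rw [coe_coeff_neg _ n hn, hmulsingle]
      rw [hord i h1 h2 _ (by omega)]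
    · obtain ⟨k, rfl⟩ : ∃ k : ℕ, n = (k : ℤ) := ⟨n.toNat, (Int.toNat_of_nonneg hn).symm⟩
      rw [hmulsingle]
      have : (Φ (Y i)).coeff (k : ℤ) = PowerSeries.coeff k (Y i) :=
        HahnSeries.ofPowerSeries_apply_coeff _ _
      rw [this, hYcoeff]
      congr 1
      ring
  have hxY : ∀ i, 1 ≤ i → i ≤ m → x i = Φ (Y i) * HahnSeries.single (-(a i : ℤ)) 1 := by
    intro i h1 h2
    rw [hYx i h1 h2, mul_assoc, HahnSeries.single_mul_single, add_neg_cancel, mul_one,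
      HahnSeries.single_zero_one, mul_one]
  have hKey : ∀ s : Finset ℕ, ∀ c : ℕ → ℕ, (∀ j ∈ s, 1 ≤ j ∧ j ≤ m) →
      ∏ j ∈ s, x j ^ c j
        = Φ (∏ j ∈ s, Y j ^ c j) * HahnSeries.single (-(∑ j ∈ s, (a j : ℤ) * c j)) 1 := by
    intro s
    induction s using Finset.induction_on with
    | empty =>
      intro c _
      simp only [Finset.prod_empty, Finset.sum_empty, neg_zero, map_one, one_mul,
        HahnSeries.single_zero_one]
    | @insert j0 s hj0 ih =>
      intro c hs
      rw [Finset.prod_insert hj0, Finset.prod_insert hj0, Finset.sum_insert hj0,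
        ih c (fun j hj => hs j (Finset.mem_insert_of_mem hj))]
      have h0 := hs j0 (Finset.mem_insert_self j0 s)
      rw [hxY j0 h0.1 h0.2, mul_pow, ← map_pow, HahnSeries.single_pow, one_pow]
      rw [mul_mul_mul_comm, ← map_mul, HahnSeries.single_mul_single, one_mul]
      congr 2
      push_cast
      ring
  -- basic arithmetic facts
  have hdpos : ∀ i, 1 ≤ i → 0 < dseq a i := fun i hi => dseq_pos_s5 a ha1 hi
  have hddvd : ∀ i, 2 ≤ i → dseq a i ∣ dseq a (i-1) := fun i _ => dseq_dvd_dseq a (by omega)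
  have hDmul : ∀ i, 2 ≤ i → dseq a (i-1) = dseq a i * (dseq a (i-1) / dseq a i) :=
    fun i hi => (Nat.mul_div_cancel' (hddvd i hi)).symm
  have hfull : ∀ i, 2 ≤ i → i ≤ m →
      ∑ j ∈ Finset.Icc 1 m, a j * ℓmat i j = a i * (dseq a (i-1) / dseq a i) := by
    intro i h2 him
    have h := (hℓ i h2 him).2
    rw [hDmul i h2] at h
    have h' : dseq a i * ∑ j ∈ Finset.Icc 1 m, a j * ℓmat i j
        = dseq a i * (a i * (dseq a (i-1) / dseq a i)) := by rw [h]; ring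
    exact Nat.eq_of_mul_eq_mul_left (hdpos i (by omega)) h'
  have hBA : ∀ i, 2 ≤ i → i ≤ m → ∀ j, (j < 1 ∨ m < j) → ℓmat i j = 0 :=
    fun i h2 him => (hℓ i h2 him).1.1
  have hsubm : ∀ i : ℕ, i ≤ m → Finset.Icc 1 (i-1) ⊆ Finset.Icc 1 m := by
    intro i him j hj
    simp only [Finset.mem_Icc] at *
    omega
  have hwle : ∀ i, 2 ≤ i → i ≤ m →
      ∑ j ∈ Finset.Icc 1 (i-1), a j * ℓmat i j ≤ a i * (dseq a (i-1) / dseq a i) := by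
    intro i h2 him
    rw [← hfull i h2 him]
    exact Finset.sum_le_sum_of_subset (hsubm i him)
  have hwgtlt : ∀ i, 2 ≤ i → i ≤ m → ∀ J ∈ S i,
      ∑ k ∈ Finset.Icc 1 m, a k * J k < a i * (dseq a (i-1) / dseq a i) := by
    intro i h2 him J hJ
    have h := ((hS i h2 him J).1 hJ).2
    rw [hDmul i h2] at h
    have h' : dseq a i * ∑ k ∈ Finset.Icc 1 m, a k * J k
        < dseq a i * (a i * (dseq a (i-1) / dseq a i)) := by
      calc dseq a i * ∑ k ∈ Finset.Icc 1 m, a k * J k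
          < a i * (dseq a i * (dseq a (i-1) / dseq a i)) := h
        _ = dseq a i * (a i * (dseq a (i-1) / dseq a i)) := by ring
    exact lt_of_mul_lt_mul_left h' (Nat.zero_le _)
  have hxne : ∀ j, 1 ≤ j → j ≤ m → x j ≠ 0 := by
    intro j h1 h2 hzero
    exact hlead j h1 h2 (by rw [hzero]; simp)
  -- the master equations in power series form
  have hEi : ∀ i, 2 ≤ i → i ≤ m →
      Y i ^ (dseq a (i-1) / dseq a i)
        = PowerSeries.X ^ (a i * (dseq a (i-1) / dseq a i)
              - ∑ j ∈ Finset.Icc 1 (i-1), a j * ℓmat i j)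
            * ∏ j ∈ Finset.Icc 1 (i-1), Y j ^ ℓmat i j
          + ∑ J ∈ S i, PowerSeries.C (lam i J) *
            (PowerSeries.X ^ (a i * (dseq a (i-1) / dseq a i)
                - ∑ k ∈ Finset.Icc 1 m, a k * J k)
              * ∏ j ∈ Finset.Icc 1 m, Y j ^ J j) := by
    intro i h2 him
    set nn := dseq a (i - 1) / dseq a i with hnn
    apply HahnSeries.ofPowerSeries_injective (Γ := ℤ) (R := ℂ)
    show Φ _ = Φ _
    have hL : Φ (Y i ^ nn) = x i ^ nn * HahnSeries.single ((a i * nn : ℕ) : ℤ) 1 := by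
      rw [map_pow, hYx i (by omega) him, mul_pow, HahnSeries.single_pow, one_pow]
      have he : nn • ((a i : ℤ)) = ((a i * nn : ℕ) : ℤ) := by push_cast; ring
      rw [he]
    have hP : (∏ j ∈ Finset.Icc 1 (i-1), x j ^ ℓmat i j)
          * HahnSeries.single ((a i * nn : ℕ) : ℤ) 1
        = Φ (PowerSeries.X ^ (a i * nn - ∑ j ∈ Finset.Icc 1 (i-1), a j * ℓmat i j)
            * ∏ j ∈ Finset.Icc 1 (i-1), Y j ^ ℓmat i j) := by
      rw [hKey (Finset.Icc 1 (i-1)) (ℓmat i) (by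
        intro j hj
        have hj' := hsubm i him hj
        simp only [Finset.mem_Icc] at hj'
        exact hj')]
      rw [mul_assoc, HahnSeries.single_mul_single, one_mul, map_mul,
        HahnSeries.ofPowerSeries_X_pow]
      have he : (-(∑ j ∈ Finset.Icc 1 (i-1), ((a j : ℤ)) * ((ℓmat i j : ℤ)))
            + ((a i * nn : ℕ) : ℤ))
          = ((a i * nn - ∑ j ∈ Finset.Icc 1 (i-1), a j * ℓmat i j : ℕ) : ℤ) := by
        rw [Nat.cast_sub (hwle i h2 him), Nat.cast_sum]
        rw [Finset.sum_congr rfl fun j (_ : j ∈ Finset.Icc 1 (i-1)) =>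
          (Nat.cast_mul (a j) (ℓmat i j) : ((a j * ℓmat i j : ℕ) : ℤ) = _)]
        ring
      rw [he]
      ring
    have hQ : ∀ J ∈ S i, (lam i J • ∏ j ∈ Finset.Icc 1 m, x j ^ J j)
          * HahnSeries.single ((a i * nn : ℕ) : ℤ) 1
        = Φ (PowerSeries.C (lam i J) *
            (PowerSeries.X ^ (a i * nn - ∑ k ∈ Finset.Icc 1 m, a k * J k)
              * ∏ j ∈ Finset.Icc 1 m, Y j ^ J j)) := by
      intro J hJ
      rw [← HahnSeries.single_zero_mul_eq_smul, hKey (Finset.Icc 1 m) J (by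
        intro j hj
        simp only [Finset.mem_Icc] at hj
        exact hj)]
      rw [map_mul, map_mul, HahnSeries.ofPowerSeries_X_pow, HahnSeries.ofPowerSeries_C,
        HahnSeries.C_apply]
      have he : (-(∑ k ∈ Finset.Icc 1 m, ((a k : ℤ)) * ((J k : ℤ)))
            + ((a i * nn : ℕ) : ℤ))
          = ((a i * nn - ∑ k ∈ Finset.Icc 1 m, a k * J k : ℕ) : ℤ) := by
        rw [Nat.cast_sub (le_of_lt (hwgtlt i h2 him J hJ)), Nat.cast_sum]
        rw [Finset.sum_congr rfl fun k (_ : k ∈ Finset.Icc 1 m) =>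
          (Nat.cast_mul (a k) (J k) : ((a k * J k : ℕ) : ℤ) = _)]
        ring
      have hsing : HahnSeries.single (-∑ k ∈ Finset.Icc 1 m, ((a k : ℤ)) * ((J k : ℤ))) (1:ℂ)
            * HahnSeries.single ((a i * nn : ℕ) : ℤ) 1
          = HahnSeries.single ((a i * nn - ∑ k ∈ Finset.Icc 1 m, a k * J k : ℕ) : ℤ) 1 := by
        rw [HahnSeries.single_mul_single, one_mul, he]
      rw [mul_assoc, mul_assoc, hsing]
      ring
    rw [hL, hF i h2 him, add_mul, Finset.sum_mul, hP, map_add, map_sum]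
    congr 1
    exact Finset.sum_congr rfl hQ
  -- the product equation in power series form
  set cp : ℕ → ℕ := fun j => (b j).toNat with hcp
  set cn : ℕ → ℕ := fun j => (-(b j)).toNat with hcn
  have hbcast : ∀ j, ((cp j : ℤ)) - ((cn j : ℤ)) = b j := fun j => Int.toNat_sub_toNat_neg (b j)
  have hE0 : ∏ j ∈ Finset.Icc 1 m, Y j ^ cp j = ∏ j ∈ Finset.Icc 1 m, Y j ^ cn j := by
    have hsplit : ∀ j ∈ Finset.Icc 1 m, x j ^ b j = x j ^ cp j / x j ^ cn j := by
      intro j hj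
      simp only [Finset.mem_Icc] at hj
      rw [← zpow_natCast (x j) (cp j), ← zpow_natCast (x j) (cn j),
        ← zpow_sub₀ (hxne j hj.1 hj.2), hbcast j]
    rw [Finset.prod_congr rfl hsplit, Finset.prod_div_distrib] at ht
    have hne : ∏ j ∈ Finset.Icc 1 m, x j ^ cn j ≠ 0 := by
      refine Finset.prod_ne_zero_iff.2 fun j hj => ?_
      simp only [Finset.mem_Icc] at hj
      exact pow_ne_zero _ (hxne j hj.1 hj.2)
    rw [div_eq_iff hne] at ht
    rw [hKey _ cp (fun j hj => by simpa using (Finset.mem_Icc.1 hj)),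
        hKey _ cn (fun j hj => by simpa using (Finset.mem_Icc.1 hj))] at ht
    apply HahnSeries.ofPowerSeries_injective (Γ := ℤ) (R := ℂ)
    show Φ _ = Φ _
    have hmul := congrArg
      (fun z => z * HahnSeries.single (∑ j ∈ Finset.Icc 1 m, ((a j : ℤ)) * ((cp j : ℤ))) (1:ℂ)) ht
    rw [mul_assoc, HahnSeries.single_mul_single, one_mul, neg_add_cancel,
      HahnSeries.single_zero_one, mul_one] at hmul
    have hexp : (-(∑ j ∈ Finset.Icc 1 m, ((a j : ℤ)) * ((cn j : ℤ)))
        + ∑ j ∈ Finset.Icc 1 m, ((a j : ℤ)) * ((cp j : ℤ))) = (-1 : ℤ) := by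
      have h1 : ∑ j ∈ Finset.Icc 1 m, (((a j : ℤ)) * ((cp j : ℤ))
          - ((a j : ℤ)) * ((cn j : ℤ))) = -1 := by
        rw [← hb]
        exact Finset.sum_congr rfl fun j _ => by rw [← mul_sub, hbcast j]
      rw [Finset.sum_sub_distrib] at h1
      linarith
    rw [hmul, mul_assoc, mul_assoc, HahnSeries.single_mul_single, one_mul, hexp,
      mul_comm (Φ (∏ j ∈ Finset.Icc 1 m, Y j ^ cn j)), ← mul_assoc,
      HahnSeries.single_mul_single, one_mul, add_neg_cancel, HahnSeries.single_zero_one,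
      one_mul]
  -- constant coefficients
  have hπne : ∀ j, 1 ≤ j → j ≤ m → PowerSeries.constantCoeff (Y j) ≠ 0 := by
    intro j h1 h2
    rw [← PowerSeries.coeff_zero_eq_constantCoeff, hYcoeff]
    simpa using hlead j h1 h2
  have hccXmul : ∀ (e : ℕ) (f : PowerSeries ℂ),
      PowerSeries.constantCoeff (PowerSeries.X ^ e * f)
        = 0 ^ e * PowerSeries.constantCoeff f := by
    intro e f
    rw [map_mul, map_pow, PowerSeries.constantCoeff_X]
  have hwW : ∀ i, 2 ≤ i → i ≤ m →
      ∑ j ∈ Finset.Icc 1 (i-1), a j * ℓmat i j = a i * (dseq a (i-1) / dseq a i) := by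
    intro i h2 him
    by_contra hne
    have hlt : 0 < a i * (dseq a (i-1) / dseq a i)
        - ∑ j ∈ Finset.Icc 1 (i-1), a j * ℓmat i j := by
      have := hwle i h2 him
      omega
    have hcc := congrArg (PowerSeries.constantCoeff) (hEi i h2 him)
    have hz : ∀ J ∈ S i, PowerSeries.constantCoeff (PowerSeries.C (lam i J) *
        (PowerSeries.X ^ (a i * (dseq a (i-1) / dseq a i)
            - ∑ k ∈ Finset.Icc 1 m, a k * J k)
          * ∏ j ∈ Finset.Icc 1 m, Y j ^ J j)) = 0 := by
      intro J hJ
      have hpos : 0 < a i * (dseq a (i-1) / dseq a i) - ∑ k ∈ Finset.Icc 1 m, a k * J k := by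
        have := hwgtlt i h2 him J hJ
        omega
      rw [map_mul, hccXmul, zero_pow (by omega), zero_mul, mul_zero]
    rw [map_pow, map_add, hccXmul, zero_pow (by omega), zero_mul, map_sum,
      Finset.sum_eq_zero hz, add_zero] at hcc
    exact pow_ne_zero _ (hπne i (by omega) him) hcc
  have hsupp : ∀ i, 2 ≤ i → i ≤ m → ∀ j, (j < 1 ∨ i ≤ j) → ℓmat i j = 0 := by
    intro i h2 him j hj
    rcases hj with hj | hj
    · exact hBA i h2 him j (Or.inl hj)
    · rcases le_or_gt j m with hjm | hjm
      · have hs := Finset.sum_sdiff (f := fun j => a j * ℓmat i j) (hsubm i him)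
        have hdiff : ∑ j ∈ Finset.Icc 1 m \ Finset.Icc 1 (i-1), a j * ℓmat i j = 0 := by
          rw [hfull i h2 him, hwW i h2 him] at hs
          exact Nat.add_right_cancel (hs.trans (zero_add _).symm)
        have hjmem : j ∈ Finset.Icc 1 m \ Finset.Icc 1 (i-1) := by
          simp only [Finset.mem_sdiff, Finset.mem_Icc]
          omega
        have hz := (Finset.sum_eq_zero_iff.1 hdiff) j hjmem
        have haj := ha j (by omega) hjm
        rcases Nat.mul_eq_zero.1 hz with h | h
        · omega
        · exact h
      · exact hBA i h2 him j (Or.inr hjm)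
  have hweight' : ∀ i, 2 ≤ i → i ≤ m →
      a i * (dseq a (i-1) / dseq a i) = ∑ j ∈ Finset.Icc 1 (i-1), a j * ℓmat i j :=
    fun i h2 him => (hwW i h2 him).symm
  have hEi' : ∀ i, 2 ≤ i → i ≤ m →
      Y i ^ (dseq a (i-1) / dseq a i)
        = ∏ j ∈ Finset.Icc 1 (i-1), Y j ^ ℓmat i j
          + ∑ J ∈ S i, PowerSeries.C (lam i J) *
            (PowerSeries.X ^ (a i * (dseq a (i-1) / dseq a i)
                - ∑ k ∈ Finset.Icc 1 m, a k * J k)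
              * ∏ j ∈ Finset.Icc 1 m, Y j ^ J j) := by
    intro i h2 him
    have h := hEi i h2 him
    rw [hwW i h2 him, Nat.sub_self, pow_zero, one_mul] at h
    exact h
  have hccE : ∀ i, 2 ≤ i → i ≤ m →
      PowerSeries.constantCoeff (Y i) ^ (dseq a (i-1) / dseq a i)
        = ∏ j ∈ Finset.Icc 1 (i-1), PowerSeries.constantCoeff (Y j) ^ ℓmat i j := by
    intro i h2 him
    have hcc := congrArg (PowerSeries.constantCoeff) (hEi' i h2 him)
    have hz : ∀ J ∈ S i, PowerSeries.constantCoeff (PowerSeries.C (lam i J) *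
        (PowerSeries.X ^ (a i * (dseq a (i-1) / dseq a i)
            - ∑ k ∈ Finset.Icc 1 m, a k * J k)
          * ∏ j ∈ Finset.Icc 1 m, Y j ^ J j)) = 0 := by
      intro J hJ
      have hpos : 0 < a i * (dseq a (i-1) / dseq a i) - ∑ k ∈ Finset.Icc 1 m, a k * J k := by
        have := hwgtlt i h2 him J hJ
        omega
      rw [map_mul, hccXmul, zero_pow (by omega), zero_mul, mul_zero]
    rw [map_pow, map_add, map_sum, Finset.sum_eq_zero hz, add_zero, map_prod] at hcc
    rw [hcc]
    exact Finset.prod_congr rfl fun j _ => map_pow _ _ _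
  have hccE0 : ∏ j ∈ Finset.Icc 1 m, PowerSeries.constantCoeff (Y j) ^ cp j
      = ∏ j ∈ Finset.Icc 1 m, PowerSeries.constantCoeff (Y j) ^ cn j := by
    have hcc := congrArg (PowerSeries.constantCoeff) hE0
    rw [map_prod, map_prod] at hcc
    rw [Finset.prod_congr rfl fun j (_ : j ∈ Finset.Icc 1 m) =>
        (map_pow (PowerSeries.constantCoeff) (Y j) (cp j)).symm,
      Finset.prod_congr rfl fun j (_ : j ∈ Finset.Icc 1 m) =>
        (map_pow (PowerSeries.constantCoeff) (Y j) (cn j)).symm, hcc]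
  have hπb : ∏ j ∈ Finset.Icc 1 m, (PowerSeries.constantCoeff (Y j)) ^ (b j) = 1 := by
    have e : ∀ j ∈ Finset.Icc 1 m, (PowerSeries.constantCoeff (Y j)) ^ (b j)
        = (PowerSeries.constantCoeff (Y j)) ^ cp j
          / (PowerSeries.constantCoeff (Y j)) ^ cn j := by
      intro j hj
      simp only [Finset.mem_Icc] at hj
      rw [← zpow_natCast _ (cp j), ← zpow_natCast _ (cn j),
        ← zpow_sub₀ (hπne j hj.1 hj.2), hbcast j]
    rw [Finset.prod_congr rfl e, Finset.prod_div_distrib, hccE0]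
    apply div_self
    refine Finset.prod_ne_zero_iff.2 fun j hj => ?_
    simp only [Finset.mem_Icc] at hj
    exact pow_ne_zero _ (hπne j hj.1 hj.2)
  have hπ1 : ∀ j, 1 ≤ j → j ≤ m → PowerSeries.constantCoeff (Y j) = 1 :=
    elim_mul m a ha1 hm1 ℓmat hsupp hweight' b hb
      (fun j => PowerSeries.constantCoeff (Y j)) hπne hccE hπb
  -- the main induction on the coefficient index
  have main : ∀ k : ℕ, ∀ j, 1 ≤ j → j ≤ m → PowerSeries.coeff k (Y j) ∈ R := by
    intro k
    induction k using Nat.strong_induction_on with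
    | _ k IH =>
      rcases Nat.eq_zero_or_pos k with rfl | hkpos
      · intro j h1 h2
        rw [PowerSeries.coeff_zero_eq_constantCoeff, hπ1 j h1 h2]
        exact R.one_mem
      · have hk0 : k ≠ 0 := by omega
        have hmemlt : ∀ j, 1 ≤ j → j ≤ m → ∀ l, l < k → PowerSeries.coeff l (Y j) ∈ R :=
          fun j h1 h2 l hl => IH l hl j h1 h2
        have hlam : ∀ i, 2 ≤ i → i ≤ m → ∀ J ∈ S i, lam i J ∈ R :=
          fun i h2 him J hJ => Subring.subset_closure ⟨i, h2, him, J, hJ, rfl⟩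
        have h1 : ∀ i, 2 ≤ i → i ≤ m →
            ((dseq a (i-1) / dseq a i : ℕ) : ℂ) * PowerSeries.coeff k (Y i)
              - ∑ j ∈ Finset.Icc 1 (i-1), ((ℓmat i j : ℕ) : ℂ)
                  * PowerSeries.coeff k (Y j) ∈ R := by
          intro i h2 him
          have hEq := congrArg (PowerSeries.coeff k) (hEi' i h2 him)
          rw [map_add, map_sum] at hEq
          have hA := ps_dcoeff_pow R hk0 (hπ1 i (by omega) him)
            (hmemlt i (by omega) him) (dseq a (i-1) / dseq a i)
          have hB := ps_dcoeff_prod R hk0 (Finset.Icc 1 (i-1)) Y (ℓmat i)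
            (fun j hj => by
              have hj' := hsubm i him hj
              simp only [Finset.mem_Icc] at hj'
              exact hπ1 j hj'.1 hj'.2)
            (fun j hj => by
              have hj' := hsubm i him hj
              simp only [Finset.mem_Icc] at hj'
              exact hmemlt j hj'.1 hj'.2)
          have hC : ∑ J ∈ S i, PowerSeries.coeff k (PowerSeries.C (lam i J) *
              (PowerSeries.X ^ (a i * (dseq a (i-1) / dseq a i)
                  - ∑ k' ∈ Finset.Icc 1 m, a k' * J k')
                * ∏ j ∈ Finset.Icc 1 m, Y j ^ J j)) ∈ R := by
            refine Subring.sum_mem _ fun J hJ => ?_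
            rw [PowerSeries.coeff_C_mul]
            refine R.mul_mem (hlam i h2 him J hJ) ?_
            refine ps_mem_Xpow_mul R ?_ (ps_mem_prodpow R (Finset.Icc 1 m) Y J
              (fun j hj => by
                simp only [Finset.mem_Icc] at hj
                exact hmemlt j hj.1 hj.2))
            have := hwgtlt i h2 him J hJ
            omega
          have e : ((dseq a (i-1) / dseq a i : ℕ) : ℂ) * PowerSeries.coeff k (Y i)
              - ∑ j ∈ Finset.Icc 1 (i-1), ((ℓmat i j : ℕ) : ℂ) * PowerSeries.coeff k (Y j)
              = -(PowerSeries.coeff k (Y i ^ (dseq a (i-1) / dseq a i))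
                  - ((dseq a (i-1) / dseq a i : ℕ) : ℂ) * PowerSeries.coeff k (Y i))
                + (PowerSeries.coeff k (∏ j ∈ Finset.Icc 1 (i-1), Y j ^ ℓmat i j)
                  - ∑ j ∈ Finset.Icc 1 (i-1), ((ℓmat i j : ℕ) : ℂ)
                      * PowerSeries.coeff k (Y j))
                + ∑ J ∈ S i, PowerSeries.coeff k (PowerSeries.C (lam i J) *
                    (PowerSeries.X ^ (a i * (dseq a (i-1) / dseq a i)
                        - ∑ k' ∈ Finset.Icc 1 m, a k' * J k')
                      * ∏ j ∈ Finset.Icc 1 m, Y j ^ J j)) := by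
            rw [hEq]
            ring
          rw [e]
          exact R.add_mem (R.add_mem (R.neg_mem hA) hB) hC
        have h0 : ∑ j ∈ Finset.Icc 1 m, ((b j : ℤ) : ℂ) * PowerSeries.coeff k (Y j) ∈ R := by
          have hEq := congrArg (PowerSeries.coeff k) hE0
          have hccs : ∀ j ∈ Finset.Icc 1 m, PowerSeries.constantCoeff (Y j) = 1 :=
            fun j hj => by
              simp only [Finset.mem_Icc] at hj
              exact hπ1 j hj.1 hj.2
          have hms : ∀ j ∈ Finset.Icc 1 m, ∀ l, l < k → PowerSeries.coeff l (Y j) ∈ R :=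
            fun j hj => by
              simp only [Finset.mem_Icc] at hj
              exact hmemlt j hj.1 hj.2
          have hD1 := ps_dcoeff_prod R hk0 (Finset.Icc 1 m) Y cp hccs hms
          have hD2 := ps_dcoeff_prod R hk0 (Finset.Icc 1 m) Y cn hccs hms
          have hterm : ∀ j ∈ Finset.Icc 1 m, ((b j : ℤ) : ℂ) * PowerSeries.coeff k (Y j)
              = ((cp j : ℕ) : ℂ) * PowerSeries.coeff k (Y j)
                - ((cn j : ℕ) : ℂ) * PowerSeries.coeff k (Y j) := by
            intro j _
            rw [← sub_mul]
            congr 1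
            have h := hbcast j
            push_cast [← h]
            ring
          have e : ∑ j ∈ Finset.Icc 1 m, ((b j : ℤ) : ℂ) * PowerSeries.coeff k (Y j)
              = -(PowerSeries.coeff k (∏ j ∈ Finset.Icc 1 m, Y j ^ cp j)
                  - ∑ j ∈ Finset.Icc 1 m, ((cp j : ℕ) : ℂ) * PowerSeries.coeff k (Y j))
                + (PowerSeries.coeff k (∏ j ∈ Finset.Icc 1 m, Y j ^ cn j)
                  - ∑ j ∈ Finset.Icc 1 m, ((cn j : ℕ) : ℂ) * PowerSeries.coeff k (Y j)) := by
            rw [Finset.sum_congr rfl hterm, Finset.sum_sub_distrib, hEq]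
            ring
          rw [e]
          exact R.add_mem (R.neg_mem hD1) hD2
        exact elim_add m a ha1 hm1 ℓmat hsupp hweight' b hb R
          (fun j => PowerSeries.coeff k (Y j)) h1 h0
  intro i h1 h2 k
  have hfin := main k i h1 h2
  rwa [hYcoeff] at hfin
end
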